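/- arXiv:1706.05456 — 5 statements merged into one kernel-verified Lean document; each statement's English description precedes it below -/
import Mathlib

section
/- Let T be a torus acting on V = 𝕜^n with weights s_1,…,s_n, and let v ∈ V have support I. Then v is semisimple (T·v closed) if and only if 0 lies in the relative interior of the convex hull of {s_i : i ∈ I}, i.e., 0 is a convex combination of the s_i (i ∈ I) with all coefficients strictly positive. -/
namespace Stmt6Aux

variable {r : ℕ}

def dot (a b : Fin r → ℚ) : ℚ := ∑ j, a j * b j

lemma dot_smul_left (t : ℚ) (a b : Fin r → ℚ) : dot (t • a) b = t * dot a b := by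
  simp [dot, Finset.mul_sum, mul_assoc]

lemma dot_sub_left (a a' b : Fin r → ℚ) : dot (a - a') b = dot a b - dot a' b := by
  simp [dot, sub_mul, Finset.sum_sub_distrib]

lemma dot_add_left (a a' b : Fin r → ℚ) : dot (a + a') b = dot a b + dot a' b := by
  simp [dot, add_mul, Finset.sum_add_distrib]

lemma dot_neg_left (a b : Fin r → ℚ) : dot (-a) b = - dot a b := by
  simp [dot, Finset.sum_neg_distrib]

lemma dot_sub_right (a b b' : Fin r → ℚ) : dot a (b - b') = dot a b - dot a b' := by
  simp [dot, mul_sub, Finset.sum_sub_distrib]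

lemma dot_smul_right (t : ℚ) (a b : Fin r → ℚ) : dot a (t • b) = t * dot a b := by
  simp [dot, Finset.mul_sum]; apply Finset.sum_congr rfl; intros; ring

lemma dot_sum_left {ι : Type*} (s : Finset ι) (f : ι → Fin r → ℚ) (b : Fin r → ℚ) :
    dot (∑ i ∈ s, f i) b = ∑ i ∈ s, dot (f i) b := by
  classical
  induction s using Finset.induction with
  | empty => simp [dot]
  | insert _ _ h ih => simp [Finset.sum_insert h, dot_add_left, ih]

lemma dot_self_pos {c : Fin r → ℚ} (hc : c ≠ 0) : 0 < dot c c := by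
  have : ∃ j, c j ≠ 0 := by
    by_contra h
    push_neg at h
    exact hc (funext h)
  obtain ⟨j, hj⟩ := this
  apply Finset.sum_pos' (fun k _ => mul_self_nonneg _)
  exact ⟨j, Finset.mem_univ j, mul_self_pos.2 hj⟩

lemma farkas {ι : Type*} [DecidableEq ι] (I : Finset ι) :
    ∀ (v : ι → Fin r → ℚ) (c : Fin r → ℚ),
    (∃ y : ι → ℚ, (∀ i ∈ I, 0 ≤ y i) ∧ c = ∑ i ∈ I, y i • v i) ∨
    (∃ lam : Fin r → ℚ, (∀ i ∈ I, 0 ≤ dot (v i) lam) ∧ dot c lam < 0) := by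
  induction I using Finset.induction with
  | empty =>
    intro v c
    by_cases hc : c = 0
    · exact Or.inl ⟨0, by simp, by simp [hc]⟩
    · refine Or.inr ⟨-c, by simp, ?_⟩
      have h1 := dot_self_pos hc
      have h2 : dot c (-c) = - dot c c := by
        simp [dot, mul_neg, Finset.sum_neg_distrib]
      linarith
  | @insert a s ha ih =>
    intro v c
    rcases ih v c with ⟨y, hy, hc⟩ | ⟨lam, hlam, hclam⟩
    · refine Or.inl ⟨Function.update y a 0, ?_, ?_⟩
      · intro i hi
        rcases Finset.mem_insert.1 hi with rfl | hi
        · simp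
        · rw [Function.update_of_ne (ne_of_mem_of_not_mem hi ha)]; exact hy i hi
      · rw [Finset.sum_insert ha, Function.update_self, zero_smul, zero_add, hc]
        apply Finset.sum_congr rfl
        intro i hi
        rw [Function.update_of_ne (ne_of_mem_of_not_mem hi ha)]
    · by_cases hva : 0 ≤ dot (v a) lam
      · refine Or.inr ⟨lam, ?_, hclam⟩
        intro i hi
        rcases Finset.mem_insert.1 hi with rfl | hi
        · exact hva
        · exact hlam i hi
      · push_neg at hva
        set D := dot (v a) lam with hD
        have hDne : D ≠ 0 := ne_of_lt hva
        set u : ι → Fin r → ℚ := fun i => v i - (dot (v i) lam / D) • v a with hu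
        set d : Fin r → ℚ := c - (dot c lam / D) • v a with hd
        rcases ih u d with ⟨y, hy, hdy⟩ | ⟨mu, hmu, hdmu⟩
        · -- c ∈ cone(insert a s)
          set β : ℚ := (dot c lam - ∑ i ∈ s, y i * dot (v i) lam) / D with hβ
          have hβpos : 0 < β := by
            apply div_pos_of_neg_of_neg _ hva
            have h1 : 0 ≤ ∑ i ∈ s, y i * dot (v i) lam :=
              Finset.sum_nonneg fun i hi => mul_nonneg (hy i hi) (hlam i hi)
            linarith
          refine Or.inl ⟨Function.update y a β, ?_, ?_⟩
          · intro i hi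
            rcases Finset.mem_insert.1 hi with rfl | hi
            · simp [hβpos.le]
            · rw [Function.update_of_ne (ne_of_mem_of_not_mem hi ha)]; exact hy i hi
          · rw [Finset.sum_insert ha, Function.update_self]
            have hsum : ∑ i ∈ s, Function.update y a β i • v i = ∑ i ∈ s, y i • v i := by
              apply Finset.sum_congr rfl
              intro i hi
              rw [Function.update_of_ne (ne_of_mem_of_not_mem hi ha)]
            rw [hsum]
            -- from hdy : d = ∑ y i • u i
            have expand : ∑ i ∈ s, y i • u i
                = ∑ i ∈ s, y i • v i - ((∑ i ∈ s, y i * dot (v i) lam) / D) • v a := by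
              rw [hu]
              simp only [smul_sub, smul_smul]
              rw [Finset.sum_sub_distrib, ← Finset.sum_smul]
              congr 1
              rw [Finset.sum_div]
              congr 1
              apply Finset.sum_congr rfl
              intros; ring
            rw [hd, expand] at hdy
            have : c = ∑ i ∈ s, y i • v i - ((∑ i ∈ s, y i * dot (v i) lam) / D) • v a
                + (dot c lam / D) • v a := by
              rw [← hdy]; abel
            rw [this, hβ]
            rw [sub_div]
            module
        · refine Or.inr ⟨mu - (dot (v a) mu / D) • lam, ?_, ?_⟩
          · intro i hi
            rcases Finset.mem_insert.1 hi with rfl | hi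
            · rw [dot_sub_right, dot_smul_right]
              rw [← hD]
              field_simp
              simp
            · have := hmu i hi
              rw [hu] at this
              rw [dot_sub_left, dot_smul_left] at this
              rw [dot_sub_right, dot_smul_right]
              have harr : dot (v i) mu - dot (v i) lam / D * dot (v a) mu
                  = dot (v i) mu - dot (v a) mu / D * dot (v i) lam := by ring
              linarith [this, harr]
          · rw [dot_sub_right, dot_smul_right]
            rw [hd, dot_sub_left, dot_smul_left] at hdmu
            have heq : dot c lam / D * dot (v a) mu = dot (v a) mu / D * dot c lam := by
              ring
            linarith


lemma stiemke {ι : Type*} [DecidableEq ι] (I : Finset ι) (hI : I.Nonempty)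
    (v : ι → Fin r → ℚ)
    (h : ¬ ∃ lam : Fin r → ℚ,
      (∀ i ∈ I, 0 ≤ dot (v i) lam) ∧ ∃ i ∈ I, 0 < dot (v i) lam) :
    ∃ α : ι → ℚ, (∀ i ∈ I, 0 < α i) ∧ (∑ i ∈ I, α i = 1) ∧ ∑ i ∈ I, α i • v i = 0 := by
  have H : ∀ i0 : ι, ∃ y : ι → ℚ,
      i0 ∈ I → ((∀ i ∈ I, 0 ≤ y i) ∧ -(v i0) = ∑ i ∈ I, y i • v i) := by
    intro i0
    by_cases hi0 : i0 ∈ I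
    · rcases farkas I v (-(v i0)) with ⟨y, hy, hc⟩ | ⟨lam, h1, h2⟩
      · exact ⟨y, fun _ => ⟨hy, hc⟩⟩
      · exfalso
        apply h
        refine ⟨lam, h1, i0, hi0, ?_⟩
        rw [dot_neg_left] at h2
        linarith
    · exact ⟨0, fun h' => absurd h' hi0⟩
  choose Y hY using H
  set β : ι → ℚ := fun i => 1 + ∑ i0 ∈ I, Y i0 i with hβ
  have hβpos : ∀ i ∈ I, 0 < β i := by
    intro i hi
    have : 0 ≤ ∑ i0 ∈ I, Y i0 i :=
      Finset.sum_nonneg fun i0 h0 => (hY i0 h0).1 i hi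
    simp only [hβ]
    linarith
  have hβsum : ∑ i ∈ I, β i • v i = 0 := by
    have step1 : ∑ i ∈ I, β i • v i
        = ∑ i ∈ I, v i + ∑ i ∈ I, ∑ i0 ∈ I, Y i0 i • v i := by
      rw [← Finset.sum_add_distrib]
      apply Finset.sum_congr rfl
      intro i _
      rw [hβ, add_smul, one_smul, Finset.sum_smul]
    rw [step1, Finset.sum_comm]
    have step2 : ∑ i0 ∈ I, ∑ i ∈ I, Y i0 i • v i = ∑ i0 ∈ I, -(v i0) := by
      apply Finset.sum_congr rfl
      intro i0 h0
      exact ((hY i0 h0).2).symm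
    rw [step2]
    simp
  set S : ℚ := ∑ i ∈ I, β i with hS
  have hSpos : 0 < S := Finset.sum_pos hβpos hI
  refine ⟨fun i => β i / S, fun i hi => div_pos (hβpos i hi) hSpos, ?_, ?_⟩
  · rw [← Finset.sum_div, ← hS, div_self (ne_of_gt hSpos)]
  · have : ∑ i ∈ I, (β i / S) • v i = S⁻¹ • ∑ i ∈ I, β i • v i := by
      rw [Finset.smul_sum]
      apply Finset.sum_congr rfl
      intro i _
      rw [smul_smul, div_eq_mul_inv, mul_comm]
    rw [this, hβsum, smul_zero]

end Stmt6Aux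


open Stmt6Aux


/-- Semisimplicity criterion for torus representations: an element with nonempty support
`I` is semisimple (there is no cocharacter `λ` with `⟨s_i, λ⟩ ≥ 0` for all `i ∈ I` and
`⟨s_i, λ⟩ > 0` for some `i ∈ I`; Hilbert–Mumford) iff `0` lies in the relative interior
of the convex hull of `{s_i : i ∈ I}`, i.e. is a strictly positive convex combination. -/
theorem stmt6 {n r : ℕ} (s : Fin n → Fin r → ℤ) (I : Finset (Fin n)) (hI : I.Nonempty) :
    (¬ ∃ lam : Fin r → ℤ,
        (∀ i ∈ I, 0 ≤ ∑ j, s i j * lam j) ∧ ∃ i ∈ I, 0 < ∑ j, s i j * lam j) ↔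
      ∃ α : Fin n → ℚ, (∀ i ∈ I, 0 < α i) ∧ (∑ i ∈ I, α i = 1) ∧
        ∑ i ∈ I, α i • (fun j => (s i j : ℚ)) = 0 := by
  set v : Fin n → Fin r → ℚ := fun i j => (s i j : ℚ) with hv
  -- equivalence between integer and rational cocharacter existence
  have hZQ : (∃ lam : Fin r → ℤ,
        (∀ i ∈ I, 0 ≤ ∑ j, s i j * lam j) ∧ ∃ i ∈ I, 0 < ∑ j, s i j * lam j) ↔
      (∃ lam : Fin r → ℚ,
        (∀ i ∈ I, 0 ≤ dot (v i) lam) ∧ ∃ i ∈ I, 0 < dot (v i) lam) := by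
    constructor
    · rintro ⟨lam, h1, i0, hi0, h2⟩
      refine ⟨fun j => (lam j : ℚ), ?_, i0, hi0, ?_⟩
      · intro i hi
        have := h1 i hi
        have hcast : dot (v i) (fun j => (lam j : ℚ)) = ((∑ j, s i j * lam j : ℤ) : ℚ) := by
          simp [dot, hv]
        rw [hcast]
        exact_mod_cast this
      · have hcast : dot (v i0) (fun j => (lam j : ℚ)) = ((∑ j, s i0 j * lam j : ℤ) : ℚ) := by
          simp [dot, hv]
        rw [hcast]
        exact_mod_cast h2
    · rintro ⟨lam, h1, i0, hi0, h2⟩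
      set N : ℚ := ∏ k, ((lam k).den : ℚ) with hN
      have hNpos : 0 < N := Finset.prod_pos fun k _ => by
        exact_mod_cast (lam k).pos
      set lamZ : Fin r → ℤ := fun j =>
        (lam j).num * ∏ k ∈ Finset.univ.erase j, ((lam k).den : ℤ) with hlamZ
      have hcast : ∀ j, (lamZ j : ℚ) = N * lam j := by
        intro j
        have hden : ((lam j).den : ℚ) * ∏ k ∈ Finset.univ.erase j, ((lam k).den : ℚ) = N := by
          rw [hN]
          exact Finset.mul_prod_erase Finset.univ (fun k => ((lam k).den : ℚ)) (Finset.mem_univ j)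
        have hnum : ((lam j).num : ℚ) = lam j * ((lam j).den : ℚ) := by
          rw [Rat.mul_den_eq_num]
        rw [hlamZ]
        push_cast
        rw [hnum, ← hden]
        ring
      have key : ∀ i, ((∑ j, s i j * lamZ j : ℤ) : ℚ) = N * dot (v i) lam := by
        intro i
        push_cast
        rw [dot, Finset.mul_sum]
        apply Finset.sum_congr rfl
        intro j _
        rw [hcast j, hv]
        ring
      refine ⟨lamZ, ?_, i0, hi0, ?_⟩
      · intro i hi
        have h3 : (0 : ℚ) ≤ N * dot (v i) lam := mul_nonneg hNpos.le (h1 i hi)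
        rw [← key i] at h3
        exact_mod_cast h3
      · have h3 : (0 : ℚ) < N * dot (v i0) lam := mul_pos hNpos h2
        rw [← key i0] at h3
        exact_mod_cast h3
  rw [hZQ]
  constructor
  · intro h
    exact stiemke I hI v h
  · rintro ⟨α, hαpos, hαsum, hαzero⟩ ⟨lam, h1, i0, hi0, h2⟩
    have hT : ∑ i ∈ I, α i * dot (v i) lam = 0 := by
      have : ∑ i ∈ I, α i * dot (v i) lam = dot (∑ i ∈ I, α i • v i) lam := by
        rw [dot_sum_left]
        apply Finset.sum_congr rfl
        intro i _
        rw [dot_smul_left]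
      rw [this, hαzero]
      simp [dot]
    have hTpos : 0 < ∑ i ∈ I, α i * dot (v i) lam := by
      apply Finset.sum_pos'
      · intro i hi
        exact mul_nonneg (hαpos i hi).le (h1 i hi)
      · exact ⟨i0, hi0, mul_pos (hαpos i0 hi0) h2⟩
    rw [hT] at hTpos
    exact lt_irrefl 0 hTpos
end

section
/- Let T be a torus acting on V = 𝕜^n with n×r weight matrix S. The null fiber μ⁻¹(0) of the moment map is irreducible if and only if for every i ∈ {1,…,n}, deleting the i-th row of S does not lower its rank: rk(S_î) = rk(S). -/
open MvPolynomial

namespace Stmt9Aux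

variable {𝕜 : Type*} [Field 𝕜] {n r : ℕ}

/-- Space of linear relations among the rows of `S`. -/
def W (S : Matrix (Fin n) (Fin r) 𝕜) : Submodule 𝕜 (Fin n → 𝕜) where
  carrier := {z | ∀ j, ∑ i, S i j * z i = 0}
  add_mem' := by
    intro a b ha hb j
    simp only [Set.mem_setOf_eq] at *
    simp [Pi.add_apply, mul_add, Finset.sum_add_distrib, ha j, hb j]
  zero_mem' := by intro j; simp
  smul_mem' := by
    intro c z hz j
    simp only [Set.mem_setOf_eq] at *
    simp only [Pi.smul_apply, smul_eq_mul, mul_left_comm, ← Finset.mul_sum, hz j, mul_zero]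

lemma split_sum {M : Type*} [AddCommMonoid M] (g : Fin n → M) (i : Fin n) :
    ∑ k, g k = g i + ∑ k : {j : Fin n // j ≠ i}, g (k : Fin n) := by
  rw [Fintype.sum_eq_add_sum_compl i,
    Finset.sum_subtype (p := fun x => x ≠ i) ({i}ᶜ : Finset (Fin n)) (fun x => by simp) g]

lemma row_mem_span_iff (S : Matrix (Fin n) (Fin r) 𝕜) (i : Fin n) :
    S i ∈ Submodule.span 𝕜 (Set.range fun k : {j : Fin n // j ≠ i} => S (k : Fin n)) ↔
      ∃ z ∈ W S, z i ≠ 0 := by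
  classical
  rw [Submodule.mem_span_range_iff_exists_fun]
  constructor
  · rintro ⟨c, hc⟩
    refine ⟨fun j => if h : j = i then 1 else -c ⟨j, h⟩, fun j => ?_, by simp⟩
    have hcj := congrFun hc j
    rw [Finset.sum_apply] at hcj
    rw [split_sum (fun k => S k j * (if h : k = i then 1 else -c ⟨k, h⟩)) i]
    simp only [dif_pos rfl, mul_one]
    have h2 : ∑ k : {j' : Fin n // j' ≠ i},
        S (k : Fin n) j * (if h : (k : Fin n) = i then 1 else -c ⟨k, h⟩)
        = -∑ k : {j' : Fin n // j' ≠ i}, c k • S (k : Fin n) j := by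
      rw [← Finset.sum_neg_distrib]
      refine Finset.sum_congr rfl fun k _ => ?_
      rw [dif_neg k.prop]
      simp only [Subtype.coe_eta, smul_eq_mul]
      ring
    rw [h2]
    have h3 : ∀ k : {j' : Fin n // j' ≠ i}, (c k • S (k : Fin n)) j = c k • S (k:Fin n) j :=
      fun k => rfl
    simp only [h3] at hcj
    rw [hcj]
    simp
  · rintro ⟨z, hz, hzi⟩
    refine ⟨fun k => -z (k : Fin n) / z i, funext fun j => ?_⟩
    have h := hz j
    rw [split_sum (fun k => S k j * z k) i] at h
    have h5 : ∑ k : {j' : Fin n // j' ≠ i}, S (k:Fin n) j * z (k : Fin n) = -(S i j * z i) :=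
      eq_neg_of_add_eq_zero_right h
    rw [Finset.sum_apply]
    have h3 : ∀ k : {j' : Fin n // j' ≠ i}, ((-z (k:Fin n) / z i) • S (k : Fin n)) j
        = (-z (k:Fin n) / z i) * S (k:Fin n) j := fun k => rfl
    simp only [h3]
    have h4 : ∑ k : {j' : Fin n // j' ≠ i}, (-z (k:Fin n) / z i) * S (k : Fin n) j
        = -(z i)⁻¹ * ∑ k : {j' : Fin n // j' ≠ i}, S (k:Fin n) j * z (k : Fin n) := by
      rw [Finset.mul_sum]
      exact Finset.sum_congr rfl fun k _ => by ring
    rw [h4, h5]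
    field_simp

lemma rank_del_iff (S : Matrix (Fin n) (Fin r) 𝕜) (i : Fin n) :
    (S.submatrix (fun k : {j : Fin n // j ≠ i} => (k : Fin n)) id).rank = S.rank ↔
      S i ∈ Submodule.span 𝕜 (Set.range fun k : {j : Fin n // j ≠ i} => S (k : Fin n)) := by
  have hsub : (S.submatrix (fun k : {j : Fin n // j ≠ i} => (k : Fin n)) id)
      = Matrix.of (fun k : {j : Fin n // j ≠ i} => S (k : Fin n)) := by
    ext k l; rfl
  set T := Submodule.span 𝕜 (Set.range fun k : {j : Fin n // j ≠ i} => S (k : Fin n)) with hT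
  set U := Submodule.span 𝕜 (Set.range S) with hU
  have hTU : T ≤ U := Submodule.span_mono (by rintro _ ⟨k, rfl⟩; exact ⟨k, rfl⟩)
  have h1 : (S.submatrix (fun k : {j : Fin n // j ≠ i} => (k : Fin n)) id).rank
      = Module.finrank 𝕜 T := by
    rw [hsub, Matrix.rank_eq_finrank_span_row]
    rfl
  have h2 : S.rank = Module.finrank 𝕜 U := Matrix.rank_eq_finrank_span_row S
  rw [h1, h2]
  constructor
  · intro h
    have : T = U := Submodule.eq_of_le_of_finrank_eq hTU h
    rw [this]
    exact Submodule.subset_span ⟨i, rfl⟩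
  · intro h
    have : U ≤ T := by
      rw [hU, Submodule.span_le]
      rintro _ ⟨k, rfl⟩
      by_cases hk : k = i
      · subst hk; exact h
      · exact Submodule.subset_span ⟨⟨k, hk⟩, rfl⟩
    rw [le_antisymm hTU this]

lemma combine [Infinite 𝕜] (S : Matrix (Fin n) (Fin r) 𝕜)
    (h : ∀ i, ∃ z ∈ W S, z i ≠ 0) : ∃ z ∈ W S, ∀ i, z i ≠ 0 := by
  classical
  suffices H : ∀ F : Finset (Fin n), ∃ z ∈ W S, ∀ i ∈ F, z i ≠ 0 by
    obtain ⟨z, hz, hz'⟩ := H Finset.univ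
    exact ⟨z, hz, fun i => hz' i (Finset.mem_univ i)⟩
  intro F
  induction F using Finset.induction with
  | empty => exact ⟨0, (W S).zero_mem, by simp⟩
  | @insert i₀ F hF ih =>
    obtain ⟨z, hz, hz'⟩ := ih
    obtain ⟨w, hw, hw'⟩ := h i₀
    obtain ⟨c, hc⟩ := Infinite.exists_notMem_finset
      ((insert i₀ F).image (fun i => -z i / w i))
    refine ⟨z + c • w, (W S).add_mem hz ((W S).smul_mem c hw), fun i hi => ?_⟩
    intro hzero
    have hzero' : z i + c * w i = 0 := hzero
    by_cases hwi : w i = 0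
    · rw [hwi, mul_zero, add_zero] at hzero'
      rcases Finset.mem_insert.mp hi with h1 | h1
      · subst h1; exact hw' hwi
      · exact hz' i h1 hzero'
    · apply hc
      refine Finset.mem_image.mpr ⟨i, hi, ?_⟩
      field_simp
      linear_combination -hzero'

/-- The generators of the moment-map ideal. -/
noncomputable def gen (S : Matrix (Fin n) (Fin r) 𝕜) : Fin r → MvPolynomial (Fin n ⊕ Fin n) 𝕜 :=
  fun j => ∑ i : Fin n, C (S i j) * X (Sum.inl i) * X (Sum.inr i)

lemma eval_gen (S : Matrix (Fin n) (Fin r) 𝕜) (j : Fin r) (x : Fin n ⊕ Fin n → 𝕜) :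
    eval x (gen S j) = ∑ i, S i j * (x (Sum.inl i) * x (Sum.inr i)) := by
  simp [gen, mul_assoc]

lemma mem_zeroLocus_iff (S : Matrix (Fin n) (Fin r) 𝕜) (x : Fin n ⊕ Fin n → 𝕜) :
    x ∈ MvPolynomial.zeroLocus 𝕜 (Ideal.span (Set.range (gen S))) ↔
      (fun i => x (Sum.inl i) * x (Sum.inr i)) ∈ W S := by
  rw [MvPolynomial.zeroLocus_span]
  constructor
  · intro hx j
    have := hx (gen S j) ⟨j, rfl⟩
    rwa [aeval_eq_eval, eval_gen] at this
  · rintro hx _ ⟨j, rfl⟩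
    rw [aeval_eq_eval, eval_gen]
    exact hx j

/-- If a pencil of evaluations of `f` vanishes off a finite set, it vanishes everywhere. -/
lemma curve_vanish [Infinite 𝕜] (f : MvPolynomial (Fin n ⊕ Fin n) 𝕜)
    (u v : Fin n ⊕ Fin n → 𝕜) (E : Set 𝕜) (hE : E.Finite)
    (h : ∀ s ∉ E, eval (fun idx => u idx + s * v idx) f = 0) :
    ∀ s, eval (fun idx => u idx + s * v idx) f = 0 := by
  set Q : Polynomial 𝕜 := eval₂ Polynomial.C
    (fun idx => Polynomial.C (u idx) + Polynomial.X * Polynomial.C (v idx)) f with hQ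
  have key : ∀ s, Polynomial.eval s Q = eval (fun idx => u idx + s * v idx) f := by
    intro s
    have := MvPolynomial.eval₂_comp_left (Polynomial.evalRingHom s) Polynomial.C
      (fun idx => Polynomial.C (u idx) + Polynomial.X * Polynomial.C (v idx)) f
    rw [hQ]
    have hcomp : (Polynomial.evalRingHom s).comp Polynomial.C = RingHom.id 𝕜 := by
      ext a; simp
    calc Polynomial.eval s (eval₂ Polynomial.C
          (fun idx => Polynomial.C (u idx) + Polynomial.X * Polynomial.C (v idx)) f)
        = Polynomial.evalRingHom s (eval₂ Polynomial.C
          (fun idx => Polynomial.C (u idx) + Polynomial.X * Polynomial.C (v idx)) f) := rfl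
      _ = eval₂ ((Polynomial.evalRingHom s).comp Polynomial.C)
            ((Polynomial.evalRingHom s) ∘ fun idx =>
              Polynomial.C (u idx) + Polynomial.X * Polynomial.C (v idx)) f := this
      _ = eval₂ (RingHom.id 𝕜) (fun idx => u idx + s * v idx) f := by
            rw [hcomp]
            congr 1
            funext idx
            rw [Function.comp_apply, map_add, map_mul]
            simp [mul_comm]
      _ = eval (fun idx => u idx + s * v idx) f := eval₂_id f
  have hQ0 : Q = 0 := by
    apply Polynomial.eq_zero_of_infinite_isRoot
    refine Set.Infinite.mono ?_ hE.infinite_compl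
    intro s hs
    simp only [Set.mem_setOf_eq, Polynomial.IsRoot, key s]
    exact h s hs
  intro s
  rw [← key s, hQ0, Polynomial.eval_zero]

section Big

variable (S : Matrix (Fin n) (Fin r) 𝕜)

lemma radical_isPrime_of_z [Infinite 𝕜] [IsAlgClosed 𝕜]
    (z : Fin n → 𝕜) (hz : z ∈ W S) (hz' : ∀ i, z i ≠ 0) :
    (Ideal.span (Set.range (gen S))).radical.IsPrime := by
  classical
  set I := Ideal.span (Set.range (gen S)) with hIdef
  set d := Module.finrank 𝕜 (W S) with hd
  set B : Module.Basis (Fin d) 𝕜 (W S) := Module.finBasis 𝕜 (W S) with hB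
  -- the parametrizing substitution
  set ψ : Fin n ⊕ Fin n → MvPolynomial (Fin n ⊕ Fin d) 𝕜 :=
    Sum.elim (fun i => X (Sum.inl i))
      (fun i => (∑ l, C (((B l : W S) : Fin n → 𝕜) i) * X (Sum.inr l)) *
        ∏ k ∈ ({i}ᶜ : Finset (Fin n)), X (Sum.inl k)) with hψ
  set φ : MvPolynomial (Fin n ⊕ Fin n) 𝕜 →+* MvPolynomial (Fin n ⊕ Fin d) 𝕜 :=
    eval₂Hom MvPolynomial.C ψ with hφ
  -- composition of evaluations
  have comp_eval : ∀ (v : Fin n ⊕ Fin d → 𝕜) (f : MvPolynomial (Fin n ⊕ Fin n) 𝕜),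
      eval v (φ f) = eval (fun s => eval v (ψ s)) f := by
    intro v f
    have h1 : eval v (eval₂ MvPolynomial.C ψ f)
        = eval₂ ((eval v).comp MvPolynomial.C) (fun s => eval v (ψ s)) f :=
      MvPolynomial.eval_eval₂ _ _ f
    have h2 : (eval v).comp (MvPolynomial.C (σ := Fin n ⊕ Fin d) (R := 𝕜)) = RingHom.id 𝕜 := by
      ext a; simp
    rw [hφ]
    simp only [coe_eval₂Hom]
    rw [h1, h2, eval₂_id]
  -- evaluation of ψ at a parameter point
  have eval_ψ_inl : ∀ (t : Fin n → 𝕜) (c : Fin d → 𝕜) (i : Fin n),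
      eval (Sum.elim t c) (ψ (Sum.inl i)) = t i := by
    intro t c i; simp [hψ]
  have eval_ψ_inr : ∀ (t : Fin n → 𝕜) (c : Fin d → 𝕜) (i : Fin n),
      eval (Sum.elim t c) (ψ (Sum.inr i)) =
        (((∑ l, c l • B l : W S) : Fin n → 𝕜) i) * ∏ k ∈ ({i}ᶜ : Finset (Fin n)), t k := by
    intro t c i
    rw [hψ]
    simp only [Sum.elim_inr, map_mul, map_sum, map_prod, eval_mul, eval_sum, eval_prod,
      eval_C, eval_X, Sum.elim_inl, Sum.elim_inr]
    congr 1
    simp [Finset.sum_apply, Pi.smul_apply, smul_eq_mul, mul_comm]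
  -- the generators lie in the kernel of φ
  have hIker : I ≤ RingHom.ker φ := by
    rw [hIdef, Ideal.span_le]
    rintro _ ⟨j, rfl⟩
    have : φ (gen S j) = 0 := by
      apply MvPolynomial.funext (q := 0)
      intro v
      have hv : v = Sum.elim (v ∘ Sum.inl) (v ∘ Sum.inr) := by
        funext s; cases s <;> rfl
      rw [map_zero, comp_eval, eval_gen]
      set t := v ∘ Sum.inl
      set c := v ∘ Sum.inr
      have hsum : ∀ i : Fin n,
          S i j * (eval v (ψ (Sum.inl i)) * eval v (ψ (Sum.inr i)))
          = (S i j * (((∑ l, c l • B l : W S) : Fin n → 𝕜) i)) * ∏ k, t k := by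
        intro i
        rw [hv, eval_ψ_inl, eval_ψ_inr]
        rw [Fintype.prod_eq_mul_prod_compl i t]
        ring
      calc (∑ i, S i j * (eval v (ψ (Sum.inl i)) * eval v (ψ (Sum.inr i))))
          = ∑ i, (S i j * (((∑ l, c l • B l : W S) : Fin n → 𝕜) i)) * ∏ k, t k := by
            exact Finset.sum_congr rfl fun i _ => hsum i
        _ = (∑ i, S i j * (((∑ l, c l • B l : W S) : Fin n → 𝕜) i)) * ∏ k, t k := by
            rw [Finset.sum_mul]
        _ = 0 := by
            rw [(∑ l, c l • B l : W S).2 j, zero_mul]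
    exact this
  -- points in the image of the parametrization kill ker φ
  have hker_vanish : ∀ f ∈ RingHom.ker φ, ∀ (t : Fin n → 𝕜) (c : Fin d → 𝕜),
      eval (Sum.elim t (fun i => (((∑ l, c l • B l : W S) : Fin n → 𝕜) i)
        * ∏ k ∈ ({i}ᶜ : Finset (Fin n)), t k)) f = 0 := by
    intro f hf t c
    have h0 : eval (Sum.elim t c) (φ f) = 0 := by
      rw [RingHom.mem_ker] at hf; rw [hf, map_zero]
    rw [comp_eval] at h0
    have : (fun s => eval (Sum.elim t c) (ψ s))
        = Sum.elim t (fun i => (((∑ l, c l • B l : W S) : Fin n → 𝕜) i)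
            * ∏ k ∈ ({i}ᶜ : Finset (Fin n)), t k) := by
      funext s
      cases s with
      | inl i => rw [eval_ψ_inl]; rfl
      | inr i => rw [eval_ψ_inr]; rfl
    rwa [this] at h0
  -- main vanishing claim: elements of ker φ vanish on the whole zero locus
  have main : ∀ f ∈ RingHom.ker φ, ∀ (a b : Fin n → 𝕜),
      ((fun i => a i * b i) ∈ W S) → eval (Sum.elim a b) f = 0 := by
    intro f hf
    -- step 1: good points (no common zeros)
    have good : ∀ (a b : Fin n → 𝕜), ((fun i => a i * b i) ∈ W S) →
        (∀ i, a i ≠ 0 ∨ b i ≠ 0) → eval (Sum.elim a b) f = 0 := by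
      intro a b hab hgood
      set α : Fin n → 𝕜 := fun i => if a i = 0 then z i * (b i)⁻¹ else a i with hα
      set β : Fin n → 𝕜 := fun i => if a i = 0 then b i else z i * (a i)⁻¹ with hβ
      have hvan : ∀ s : 𝕜, s ∉ ({0, -1} : Set 𝕜) →
          eval (fun idx => Sum.elim a b idx + s * Sum.elim α β idx) f = 0 := by
        intro s hs
        have hs0 : s ≠ 0 := fun h => hs (by simp [h])
        have hs1 : 1 + s ≠ 0 := by
          intro h
          apply hs
          have : s = -1 := by linear_combination h
          simp [this]
        set t : Fin n → 𝕜 := fun i => a i + s * α i with ht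
        set y : Fin n → 𝕜 := fun i => b i + s * β i with hy
        have htne : ∀ i, t i ≠ 0 := by
          intro i
          show a i + s * α i ≠ 0
          by_cases hai : a i = 0
          · have hbi : b i ≠ 0 := (hgood i).resolve_left (fun hh => (hh hai).elim)
            rw [hα]
            simp only [if_pos hai, hai, zero_add]
            exact mul_ne_zero hs0 (mul_ne_zero (hz' i) (inv_ne_zero hbi))
          · rw [hα]
            simp only [if_neg hai]
            intro hcon
            have : a i * (1 + s) = 0 := by linear_combination hcon
            rcases mul_eq_zero.mp this with h | h
            · exact hai h
            · exact hs1 h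
        have hprod : (∏ k, t k) ≠ 0 := Finset.prod_ne_zero_iff.mpr fun k _ => htne k
        have hty : ∀ i, t i * y i = (1 + s) * (a i * b i) + (s * (1 + s)) * z i := by
          intro i
          rw [ht, hy, hα, hβ]
          by_cases hai : a i = 0
          · have hbi : b i ≠ 0 := (hgood i).resolve_left (fun hh => (hh hai).elim)
            simp only [if_pos hai, hai, if_true]
            field_simp
          · simp only [if_neg hai]
            field_simp
        -- the element of W S hit at parameter s
        set wS : W S := ((1 + s) * (∏ k, t k)⁻¹) • ⟨fun i => a i * b i, hab⟩
            + (s * (1 + s) * (∏ k, t k)⁻¹) • ⟨z, hz⟩ with hwS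
        set c : Fin d → 𝕜 := fun l => B.repr wS l with hc
        have hwc : (∑ l, c l • B l : W S) = wS := by
          rw [hc]
          exact B.sum_repr wS
        have hwcoord : ∀ i, ((wS : W S) : Fin n → 𝕜) i = t i * y i * (∏ k, t k)⁻¹ := by
          intro i
          rw [hty i, hwS]
          simp only [Submodule.coe_add, Submodule.coe_smul, Pi.add_apply, Pi.smul_apply,
            smul_eq_mul]
          ring
        have him := hker_vanish f hf t c
        have heq : (Sum.elim t (fun i => (((∑ l, c l • B l : W S) : Fin n → 𝕜) i)
            * ∏ k ∈ ({i}ᶜ : Finset (Fin n)), t k))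
            = fun idx => Sum.elim a b idx + s * Sum.elim α β idx := by
          funext idx
          cases idx with
          | inl i => simp [ht]
          | inr i =>
            simp only [Sum.elim_inr]
            rw [hwc, hwcoord i]
            have hP : (∏ k ∈ ({i}ᶜ : Finset (Fin n)), t k) ≠ 0 :=
              Finset.prod_ne_zero_iff.mpr fun k _ => htne k
            have hsplit : ∏ k, t k = t i * ∏ k ∈ ({i}ᶜ : Finset (Fin n)), t k :=
              Fintype.prod_eq_mul_prod_compl i t
            have hyy : t i * y i * (∏ k, t k)⁻¹ * ∏ k ∈ ({i}ᶜ : Finset (Fin n)), t k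
                = y i := by
              rw [hsplit, mul_inv]
              calc t i * y i * ((t i)⁻¹ * (∏ k ∈ ({i}ᶜ : Finset (Fin n)), t k)⁻¹) *
                    ∏ k ∈ ({i}ᶜ : Finset (Fin n)), t k
                  = y i * (t i * (t i)⁻¹) * ((∏ k ∈ ({i}ᶜ : Finset (Fin n)), t k) *
                    (∏ k ∈ ({i}ᶜ : Finset (Fin n)), t k)⁻¹) := by ring
                _ = y i := by
                    rw [mul_inv_cancel₀ (htne i), mul_inv_cancel₀ hP, mul_one, mul_one]
            rw [hyy]
        rwa [heq] at him
      have h00 := curve_vanish f (Sum.elim a b) (Sum.elim α β) {0, -1}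
        (Set.Finite.insert 0 (Set.finite_singleton (-1))) hvan 0
      simpa using h00
    -- step 2: induction removing common zeros
    have step : ∀ m : ℕ, ∀ (a b : Fin n → 𝕜), ((fun i => a i * b i) ∈ W S) →
        (Finset.univ.filter (fun i => a i = 0 ∧ b i = 0)).card ≤ m →
        eval (Sum.elim a b) f = 0 := by
      intro m
      induction m with
      | zero =>
        intro a b hab hcard
        apply good a b hab
        intro i
        by_contra hcon
        push_neg at hcon
        have : i ∈ Finset.univ.filter (fun i => a i = 0 ∧ b i = 0) := by
          simp [hcon.1, hcon.2]
        have := Finset.card_pos.mpr ⟨i, this⟩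
        omega
      | succ m ih =>
        intro a b hab hcard
        by_cases hex : ∃ i, a i = 0 ∧ b i = 0
        · obtain ⟨i, hai, hbi⟩ := hex
          have hvan : ∀ s : 𝕜, s ∉ ({0} : Set 𝕜) →
              eval (fun idx => Sum.elim a b idx + s * Sum.elim (Pi.single i 1 : Fin n → 𝕜) (0 : Fin n → 𝕜) idx) f
                = 0 := by
            intro s hs
            have hs0 : s ≠ 0 := fun h => hs (by simp [h])
            set a' : Fin n → 𝕜 := fun k => a k + s * (Pi.single i 1 : Fin n → 𝕜) k with ha'
            have heq : (fun idx => Sum.elim a b idx + s * Sum.elim (Pi.single i 1 : Fin n → 𝕜) (0 : Fin n → 𝕜) idx)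
                = Sum.elim a' b := by
              funext idx; cases idx with
              | inl k => simp [ha']
              | inr k => simp
            rw [heq]
            apply ih a' b
            · have : (fun k => a' k * b k) = (fun k => a k * b k) := by
                funext k
                rw [ha']
                by_cases hk : k = i
                · subst hk; rw [hbi]; ring
                · simp only [Pi.single_eq_of_ne hk]; ring
              rw [this]; exact hab
            · have hsubset : Finset.univ.filter (fun k => a' k = 0 ∧ b k = 0)
                  ⊆ (Finset.univ.filter (fun k => a k = 0 ∧ b k = 0)).erase i := by
                intro k hk
                simp only [Finset.mem_filter, Finset.mem_univ, true_and] at hk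
                rw [Finset.mem_erase]
                constructor
                · intro hki
                  subst hki
                  rw [ha'] at hk
                  simp [hai, Pi.single_eq_same] at hk
                  exact hs0 hk.1
                · have hki : k ≠ i := by
                    intro hki; subst hki
                    rw [ha'] at hk
                    simp [hai, Pi.single_eq_same] at hk
                    exact hs0 hk.1
                  simp only [ha', Pi.single_eq_of_ne hki] at hk
                  simp only [Finset.mem_filter, Finset.mem_univ, true_and]
                  constructor
                  · have := hk.1; linear_combination this
                  · exact hk.2
              have hi : i ∈ Finset.univ.filter (fun k => a k = 0 ∧ b k = 0) := by
                simp [hai, hbi]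
              calc (Finset.univ.filter (fun k => a' k = 0 ∧ b k = 0)).card
                  ≤ ((Finset.univ.filter (fun k => a k = 0 ∧ b k = 0)).erase i).card :=
                    Finset.card_le_card hsubset
                _ = (Finset.univ.filter (fun k => a k = 0 ∧ b k = 0)).card - 1 :=
                    Finset.card_erase_of_mem hi
                _ ≤ m := by omega
          have := curve_vanish f (Sum.elim a b) (Sum.elim (Pi.single i 1 : Fin n → 𝕜) (0 : Fin n → 𝕜)) {0}
            (Set.finite_singleton 0) hvan 0
          simpa using this
        · push_neg at hex
          exact good a b hab fun i => by
            rcases eq_or_ne (a i) 0 with h | h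
            · exact Or.inr (hex i h)
            · exact Or.inl h
    intro a b hab
    exact step (Finset.univ.filter (fun i => a i = 0 ∧ b i = 0)).card a b hab le_rfl
  -- conclude: the radical is the kernel of φ
  have hrad : I.radical = RingHom.ker φ := by
    apply le_antisymm
    · have h1 : I.radical ≤ (RingHom.ker φ).radical := Ideal.radical_mono hIker
      rwa [(RingHom.ker_isPrime φ).radical] at h1
    · rw [← MvPolynomial.vanishingIdeal_zeroLocus_eq_radical (K := 𝕜)]
      intro f hf
      rw [MvPolynomial.mem_vanishingIdeal_iff]
      intro x hx
      have hxel : x = Sum.elim (x ∘ Sum.inl) (x ∘ Sum.inr) := by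
        funext s; cases s <;> rfl
      have hab : ((fun i => (x ∘ Sum.inl) i * (x ∘ Sum.inr) i) ∈ W S) :=
        (mem_zeroLocus_iff S x).mp hx
      rw [hxel]
      exact main f hf _ _ hab
  rw [hrad]
  exact RingHom.ker_isPrime φ

end Big

lemma exists_z_of_prime [IsAlgClosed 𝕜] (S : Matrix (Fin n) (Fin r) 𝕜)
    (h : (Ideal.span (Set.range (gen S))).radical.IsPrime) :
    ∀ i, ∃ z ∈ W S, z i ≠ 0 := by
  intro i
  by_contra h0
  push_neg at h0
  set I := Ideal.span (Set.range (gen S)) with hIdef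
  have hxy : (X (Sum.inl i) * X (Sum.inr i) : MvPolynomial (Fin n ⊕ Fin n) 𝕜) ∈ I.radical := by
    rw [← MvPolynomial.vanishingIdeal_zeroLocus_eq_radical (K := 𝕜),
      MvPolynomial.mem_vanishingIdeal_iff]
    intro x hx
    have hab := (mem_zeroLocus_iff S x).mp hx
    have := h0 _ hab
    simp only [map_mul, aeval_X]
    exact this
  have hpt : ∀ (a b : Fin n → 𝕜), ((fun k => a k * b k) = 0) →
      Sum.elim a b ∈ MvPolynomial.zeroLocus 𝕜 I := by
    intro a b hab0
    rw [mem_zeroLocus_iff]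
    have : (fun k => Sum.elim a b (Sum.inl k) * Sum.elim a b (Sum.inr k)) = 0 := hab0
    rw [this]
    exact (W S).zero_mem
  rcases h.mem_or_mem hxy with hc | hc
  · have hmem : (X (Sum.inl i) : MvPolynomial (Fin n ⊕ Fin n) 𝕜)
        ∈ MvPolynomial.vanishingIdeal 𝕜 (MvPolynomial.zeroLocus 𝕜 I) := by
      rw [MvPolynomial.vanishingIdeal_zeroLocus_eq_radical]; exact hc
    rw [MvPolynomial.mem_vanishingIdeal_iff] at hmem
    have := hmem (Sum.elim (Pi.single i 1 : Fin n → 𝕜) (0 : Fin n → 𝕜))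
      (hpt _ _ (by funext k; simp))
    simp at this
  · have hmem : (X (Sum.inr i) : MvPolynomial (Fin n ⊕ Fin n) 𝕜)
        ∈ MvPolynomial.vanishingIdeal 𝕜 (MvPolynomial.zeroLocus 𝕜 I) := by
      rw [MvPolynomial.vanishingIdeal_zeroLocus_eq_radical]; exact hc
    rw [MvPolynomial.mem_vanishingIdeal_iff] at hmem
    have := hmem (Sum.elim (0 : Fin n → 𝕜) (Pi.single i 1 : Fin n → 𝕜))
      (hpt _ _ (by funext k; simp))
    simp at this

lemma irr_iff_radical_prime {R : Type*} [CommRing R] (I : Ideal R) :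
    IrreducibleSpace (PrimeSpectrum (R ⧸ I)) ↔ I.radical.IsPrime := by
  rw [irreducibleSpace_def, Set.top_eq_univ, ← PrimeSpectrum.zeroLocus_bot,
    PrimeSpectrum.isIrreducible_zeroLocus_iff]
  have key : Ideal.comap (Ideal.Quotient.mk I) ((⊥ : Ideal (R ⧸ I)).radical) = I.radical := by
    rw [Ideal.comap_radical, ← RingHom.ker_eq_comap_bot, Ideal.mk_ker]
  constructor
  · intro h
    rw [← key]
    exact Ideal.IsPrime.comap _
  · intro h
    have hbot : (⊥ : Ideal (R ⧸ I)).radical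
        = Ideal.map (Ideal.Quotient.mk I) I.radical := by
      rw [Ideal.map_radical_of_surjective Ideal.Quotient.mk_surjective
        (by rw [Ideal.mk_ker]), Ideal.map_quotient_self]
    rw [hbot]
    exact Ideal.map_isPrime_of_surjective Ideal.Quotient.mk_surjective
      (by rw [Ideal.mk_ker]; exact Ideal.le_radical)

end Stmt9Aux

/-- The null fiber of the moment map of a torus representation with weight matrix `S`
(the closed subscheme of `V ⊕ V*` cut out by `∑ᵢ S i j · xᵢ · yᵢ = 0` for `j = 1,…,r`)
is irreducible iff for every `i`, deleting the `i`-th row of `S` does not lower its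
rank. -/
theorem stmt9 {𝕜 : Type*} [Field 𝕜] [IsAlgClosed 𝕜] [CharZero 𝕜] {n r : ℕ}
    (S : Matrix (Fin n) (Fin r) 𝕜)
    (I : Ideal (MvPolynomial (Fin n ⊕ Fin n) 𝕜))
    (hI : I = Ideal.span (Set.range fun j : Fin r =>
      ∑ i : Fin n, MvPolynomial.C (S i j) *
        MvPolynomial.X (Sum.inl i) * MvPolynomial.X (Sum.inr i))) :
    IrreducibleSpace (PrimeSpectrum (MvPolynomial (Fin n ⊕ Fin n) 𝕜 ⧸ I)) ↔
      ∀ i : Fin n,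
        (S.submatrix (fun k : {j : Fin n // j ≠ i} => (k : Fin n)) id).rank = S.rank := by
  subst hI
  rw [Stmt9Aux.irr_iff_radical_prime]
  constructor
  · intro h i
    rw [Stmt9Aux.rank_del_iff, Stmt9Aux.row_mem_span_iff]
    exact Stmt9Aux.exists_z_of_prime S h i
  · intro h
    obtain ⟨z, hz, hz'⟩ := Stmt9Aux.combine S
      (fun i => (Stmt9Aux.row_mem_span_iff S i).mp ((Stmt9Aux.rank_del_iff S i).mp (h i)))
    exact Stmt9Aux.radical_isPrime_of_z S z hz hz'
end

section
/- Suppose the weight set {s_1,…,s_n} admits a partition {1,…,n} = I_0 ⊔ I_1 ⊔ … ⊔ I_l such that (i) ⟨s_i : all i⟩ = ⊕_{j=0}^l ⟨s_i : i ∈ I_j⟩, (ii) the weights in I_0 are linearly independent while for j ≥ 1 the weights in I_j span a space of dimension #I_j − 1, and (iii) for j ≥ 1, 0 is a strictly positive rational combination of {s_i : i ∈ I_j}. Then for every subset Ĩ ⊆ {1,…,n} with 0 ∉ CH({s_i : i ∈ Ĩ}), the family {s_i : i ∈ Ĩ} is linearly independent. -/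
open Submodule Module

lemma key_lem {W : Type*} [AddCommGroup W] [Module ℚ W] {n : ℕ}
    (s : Fin n → W) (Pj T : Finset (Fin n)) (hT : T ⊆ Pj) (hne : T ≠ Pj)
    (hdim : Pj.card = Module.finrank ℚ ↥(Submodule.span ℚ (s '' ↑Pj)) + 1)
    (α : Fin n → ℚ) (hα : ∀ i ∈ Pj, 0 < α i) (hα0 : ∑ i ∈ Pj, α i • s i = 0) :
    LinearIndependent ℚ (fun i : ↥T => s i) := by
  classical
  set v : ↥Pj → W := fun i => s i with hv
  set L := Fintype.linearCombination ℚ v with hL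
  have hrangev : Set.range v = s '' ↑Pj := by
    rw [hv]; ext x; simp
  have hrange : LinearMap.range L = Submodule.span ℚ (s '' ↑Pj) := by
    rw [hL, Fintype.range_linearCombination, hrangev]
  have hdom : Module.finrank ℚ (↥Pj → ℚ) = Pj.card := by
    rw [Module.finrank_fintype_fun_eq_card, Fintype.card_coe]
  have hrn := LinearMap.finrank_range_add_finrank_ker L
  rw [hdom, hrange] at hrn
  have hker : Module.finrank ℚ (LinearMap.ker L) = 1 := by omega
  -- the positive relation
  set r : ↥Pj → ℚ := fun i => α i with hr
  have hrker : r ∈ LinearMap.ker L := by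
    rw [LinearMap.mem_ker, hL, Fintype.linearCombination_apply]
    calc ∑ i : ↥Pj, r i • v i = ∑ i ∈ Pj, α i • s i :=
          Finset.sum_coe_sort Pj (fun i => α i • s i)
      _ = 0 := hα0
  have hPjne : Pj.Nonempty := by
    rw [← Finset.card_pos, hdim]; omega
  have hrne : r ≠ 0 := by
    obtain ⟨i, hi⟩ := hPjne
    intro h
    have := congrFun h ⟨i, hi⟩
    exact absurd this (ne_of_gt (hα i hi))
  have hspan : Submodule.span ℚ {r} = LinearMap.ker L := by
    apply Submodule.eq_of_le_of_finrank_eq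
    · rw [Submodule.span_le, Set.singleton_subset_iff]; exact hrker
    · rw [hker, finrank_span_singleton hrne]
  -- now prove linear independence
  rw [Fintype.linearIndependent_iff]
  intro g hg
  set c' : Fin n → ℚ := fun i => if h : i ∈ T then g ⟨i, h⟩ else 0 with hc'
  set c : ↥Pj → ℚ := fun i => c' i with hc
  have hcker : c ∈ LinearMap.ker L := by
    rw [LinearMap.mem_ker, hL, Fintype.linearCombination_apply]
    have e1 : ∑ i : ↥Pj, c i • v i = ∑ i ∈ Pj, c' i • s i :=
      Finset.sum_coe_sort Pj (fun i => c' i • s i)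
    have e2 : ∑ i ∈ T, c' i • s i = ∑ i ∈ Pj, c' i • s i := by
      apply Finset.sum_subset hT
      intro i _ hiT
      simp only [hc', dif_neg hiT, zero_smul]
    have e3 : ∑ i ∈ T, c' i • s i = ∑ i : ↥T, g i • s i := by
      rw [← Finset.sum_coe_sort T (fun i => c' i • s i)]
      apply Finset.sum_congr rfl
      intro i _
      simp only [hc', dif_pos i.2]
    rw [e1, ← e2, e3, hg]
  rw [← hspan, Submodule.mem_span_singleton] at hcker
  obtain ⟨t, ht⟩ := hcker
  obtain ⟨i0, hi0P, hi0T⟩ := Finset.exists_of_ssubset (hT.ssubset_of_ne hne)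
  have hc0 : c ⟨i0, hi0P⟩ = 0 := by rw [hc]; simp only [hc']; rw [dif_neg hi0T]
  have ht0 : t = 0 := by
    have := congrFun ht ⟨i0, hi0P⟩
    rw [hc0] at this
    have hpos := hα i0 hi0P
    simp only [Pi.smul_apply, smul_eq_mul, hr] at this
    rcases mul_eq_zero.mp this with h | h
    · exact h
    · exact absurd h (ne_of_gt hpos)
  have hczero : c = 0 := by rw [← ht, ht0, zero_smul]
  intro i
  have : c ⟨(i : Fin n), hT i.2⟩ = g i := by
    rw [hc]; simp only [hc']; rw [dif_pos i.2]
  rw [← this, hczero]; rfl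


/-- Suppose the weights `s_1, …, s_n` admit a partition `{1,…,n} = I_0 ⊔ I_1 ⊔ … ⊔ I_l`
such that (i) the spans of the blocks are in direct sum, (ii) the weights in `I_0` are
linearly independent while for `j ≥ 1` the weights of `I_j` span a space of dimension
`#I_j − 1`, and (iii) for `j ≥ 1`, `0` is a strictly positive rational combination of
`{s_i : i ∈ I_j}`. Then every subset `Ĩ` with `0 ∉ CH({s_i : i ∈ Ĩ})` consists of
linearly independent weights. -/
theorem stmt14 {W : Type*} [AddCommGroup W] [Module ℚ W] {n l : ℕ}
    (s : Fin n → W) (P : Fin (l + 1) → Finset (Fin n))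
    (hdisj : ∀ j j' : Fin (l + 1), j ≠ j' → Disjoint (P j) (P j'))
    (hcover : ∀ i : Fin n, ∃ j, i ∈ P j)
    (hsum : iSupIndep fun j => Submodule.span ℚ (s '' ↑(P j)))
    (h0 : LinearIndependent ℚ (fun i : ↥(P 0) => s i))
    (hdim : ∀ j, j ≠ 0 →
      (P j).card = Module.finrank ℚ ↥(Submodule.span ℚ (s '' ↑(P j))) + 1)
    (hpos : ∀ j, j ≠ 0 →
      ∃ α : Fin n → ℚ, (∀ i ∈ P j, 0 < α i) ∧ ∑ i ∈ P j, α i • s i = 0) :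
    ∀ It : Finset (Fin n), (0 : W) ∉ convexHull ℚ (s '' ↑It) →
      LinearIndependent ℚ (fun i : ↥It => s i) := by
  classical
  intro It hIt
  set Q : Fin (l + 1) → Finset (Fin n) := fun j => It ∩ P j with hQ
  -- each block is linearly independent
  have hblock : ∀ j, LinearIndependent ℚ (fun i : ↥(Q j) => s i) := by
    intro j
    by_cases hj : j = 0
    · subst hj
      have hsub : Q 0 ⊆ P 0 := Finset.inter_subset_right
      apply h0.comp (fun i : ↥(Q 0) => (⟨i, hsub i.2⟩ : ↥(P 0)))
      intro a b hab
      exact Subtype.ext (congrArg (Subtype.val : ↥(P 0) → Fin n) hab)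
    · obtain ⟨α, hα, hα0⟩ := hpos j hj
      have hsub : Q j ⊆ P j := Finset.inter_subset_right
      have hne : Q j ≠ P j := by
        intro heq
        apply hIt
        have hPIt : (P j) ⊆ It := by
          intro i hi
          have : i ∈ Q j := heq ▸ hi
          exact (Finset.mem_inter.mp this).1
        have hz : (P j).centerMass α s ∈ convexHull ℚ (s '' ↑It) := by
          apply Finset.centerMass_mem_convexHull
          · exact fun i hi => le_of_lt (hα i hi)
          · apply Finset.sum_pos hα
            rw [← Finset.card_pos, hdim j hj]; omega
          · exact fun i hi => Set.mem_image_of_mem s (hPIt hi)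
        rwa [Finset.centerMass, hα0, smul_zero] at hz
      exact key_lem s (P j) (Q j) hsub hne (hdim j hj) α hα hα0
  -- combine via the direct sum condition
  have hsig : LinearIndependent ℚ (fun p : Σ j, ↥(Q j) => s p.2) := by
    apply linearIndependent_iUnion_finite (f := fun j (i : ↥(Q j)) => s i) hblock
    intro j t _ hjt
    have h1 : Submodule.span ℚ (Set.range fun i : ↥(Q j) => s i)
        ≤ Submodule.span ℚ (s '' ↑(P j)) := by
      apply Submodule.span_mono
      rintro x ⟨i, rfl⟩
      exact Set.mem_image_of_mem s ((Finset.inter_subset_right) i.2)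
    have h2 : (⨆ j' ∈ t, Submodule.span ℚ (Set.range fun i : ↥(Q j') => s i))
        ≤ ⨆ (j') (_ : j' ≠ j), Submodule.span ℚ (s '' ↑(P j')) := by
      apply iSup₂_le
      intro j' hj'
      have hne : j' ≠ j := fun h => hjt (h ▸ hj')
      refine le_trans ?_ (le_iSup₂ (f := fun (j'' : Fin (l+1)) (_ : j'' ≠ j) =>
        Submodule.span ℚ (s '' ↑(P j''))) j' hne)
      apply Submodule.span_mono
      rintro x ⟨i, rfl⟩
      exact Set.mem_image_of_mem s ((Finset.inter_subset_right) i.2)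
    exact ((hsum j).mono_left h1).mono_right h2
  -- transfer to It
  set e : ↥It → Σ j, ↥(Q j) := fun i =>
    ⟨Classical.choose (hcover i), ⟨(i : Fin n),
      Finset.mem_inter.mpr ⟨i.2, Classical.choose_spec (hcover i)⟩⟩⟩ with he
  have hinj : Function.Injective e := by
    intro a b hab
    have := congrArg (fun p : Σ j, ↥(Q j) => ((p.2 : Fin n))) hab
    exact Subtype.ext this
  exact hsig.comp e hinj
end

section
/- Suppose s_1,…,s_n ∈ ℚ^r admit a partition as in the visibility criterion (blocks I_0 with independent weights and blocks I_j, j ≥ 1, each carrying a unique positive relation ∑_{i∈I_j} α_i s_i = 0 with all α_i > 0, with spans in direct sum). If s_n ∈ ⟨s_1,…,s_{n−1}⟩ (where the partition is of {1,…,n−1}), then there exists a subset Ĩ ⊆ {1,…,n−1} and nonzero rationals (β_i)_{i∈Ĩ} with s_n = ∑_{i∈Ĩ} β_i s_i, such that Ĩ ∩ I_j ≠ I_j for every j ≥ 1, and β_i > 0 for every i ∈ Ĩ ∩ (I_1 ∪ … ∪ I_l). -/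
/-- Inductive step of the visibility criterion: suppose the weights `t_1, …, t_m` admit
a partition into blocks `I_0, I_1, …, I_l` as in the visibility criterion (block `I_0`
linearly independent, each block `I_j`, `j ≥ 1`, of dimension `#I_j − 1` carrying a
strictly positive relation, spans in direct sum). If `v ∈ ⟨t_1, …, t_m⟩`, then there is
a subset `Ĩ` and nonzero rationals `(β_i)_{i ∈ Ĩ}` with `v = ∑_{i∈Ĩ} β_i t_i`, such that
`Ĩ ∩ I_j ≠ I_j` for every `j ≥ 1` and `β_i > 0` for every `i ∈ Ĩ ∩ (I_1 ∪ … ∪ I_l)`. -/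
theorem stmt15 {W : Type*} [AddCommGroup W] [Module ℚ W] {m l : ℕ}
    (t : Fin m → W) (v : W) (P : Fin (l + 1) → Finset (Fin m))
    (hdisj : ∀ j j' : Fin (l + 1), j ≠ j' → Disjoint (P j) (P j'))
    (hcover : ∀ i : Fin m, ∃ j, i ∈ P j)
    (hsum : iSupIndep fun j => Submodule.span ℚ (t '' ↑(P j)))
    (h0 : LinearIndependent ℚ (fun i : ↥(P 0) => t i))
    (hdim : ∀ j, j ≠ 0 →
      (P j).card = Module.finrank ℚ ↥(Submodule.span ℚ (t '' ↑(P j))) + 1)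
    (hpos : ∀ j, j ≠ 0 →
      ∃ α : Fin m → ℚ, (∀ i ∈ P j, 0 < α i) ∧ ∑ i ∈ P j, α i • t i = 0)
    (hv : v ∈ Submodule.span ℚ (Set.range t)) :
    ∃ (It : Finset (Fin m)) (β : Fin m → ℚ),
      (∀ i ∈ It, β i ≠ 0) ∧ v = ∑ i ∈ It, β i • t i ∧
      (∀ j, j ≠ 0 → It ∩ P j ≠ P j) ∧
      (∀ j, j ≠ 0 → ∀ i ∈ It ∩ P j, 0 < β i) := by
  classical
  -- a coefficient representation of v
  obtain ⟨c, hc⟩ := (Submodule.mem_span_range_iff_exists_fun ℚ).mp hv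
  -- choose the positive relations
  set A : Fin (l + 1) → Fin m → ℚ :=
    fun j => if h : j = 0 then 1 else (hpos j h).choose with hA
  have hApos : ∀ j (h : j ≠ 0), ∀ i ∈ P j, 0 < A j i := by
    intro j h i hi
    simp only [hA, dif_neg h]
    exact (hpos j h).choose_spec.1 i hi
  have hAsum : ∀ j (h : j ≠ 0), ∑ i ∈ P j, A j i • t i = 0 := by
    intro j h
    simp only [hA, dif_neg h]
    exact (hpos j h).choose_spec.2
  -- each block j ≠ 0 is nonempty
  have hPne : ∀ j : Fin (l + 1), j ≠ 0 → (P j).Nonempty := by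
    intro j hj
    refine Finset.card_pos.mp ?_
    rw [hdim j hj]; omega
  -- the block of an index
  set b : Fin m → Fin (l + 1) := fun i => (hcover i).choose with hb
  have hbmem : ∀ i, i ∈ P (b i) := fun i => (hcover i).choose_spec
  have hbuniq : ∀ i j, i ∈ P j → b i = j := by
    intro i j h
    by_contra hne
    exact (Finset.disjoint_left.mp (hdisj _ _ hne)) (hbmem i) h
  -- the shift constants
  set lam : Fin (l + 1) → ℚ :=
    fun j => if h : j = 0 then 0
      else (P j).sup' (hPne j h) (fun i => -c i / A j i) with hlam
  have hlam_ge : ∀ j (h : j ≠ 0), ∀ i ∈ P j, -c i / A j i ≤ lam j := by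
    intro j h i hi
    simp only [hlam, dif_neg h]
    exact Finset.le_sup' (fun i => -c i / A j i) hi
  have hlam_ex : ∀ j (h : j ≠ 0), ∃ i ∈ P j, lam j = -c i / A j i := by
    intro j h
    obtain ⟨i, hi, hval⟩ := Finset.exists_mem_eq_sup' (hPne j h) (fun i => -c i / A j i)
    exact ⟨i, hi, by simp only [hlam, dif_neg h]; exact hval⟩
  -- adjusted coefficients
  set β : Fin m → ℚ :=
    fun i => c i + (if b i = 0 then 0 else lam (b i) * A (b i) i) with hβ
  have hβnonneg : ∀ j, j ≠ 0 → ∀ i ∈ P j, 0 ≤ β i := by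
    intro j hj i hi
    have hbi : b i = j := hbuniq i j hi
    simp only [hβ, hbi, if_neg hj]
    have hA' := hApos j hj i hi
    have := hlam_ge j hj i hi
    rw [div_le_iff₀ hA'] at this
    linarith
  -- the support
  refine ⟨Finset.univ.filter (fun i => β i ≠ 0), β, ?_, ?_, ?_, ?_⟩
  · intro i hi
    exact (Finset.mem_filter.mp hi).2
  · -- the sum
    have hsumfilter : ∑ i ∈ Finset.univ.filter (fun i => β i ≠ 0), β i • t i
        = ∑ i, β i • t i := by
      refine Finset.sum_subset (Finset.filter_subset _ _) ?_
      intro i _ hi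
      simp only [Finset.mem_filter, Finset.mem_univ, true_and, not_not] at hi
      simp [hi]
    rw [hsumfilter]
    have huniv : (Finset.univ : Finset (Fin m)) = Finset.univ.biUnion P := by
      ext i
      simp only [Finset.mem_univ, Finset.mem_biUnion, true_iff]
      exact ⟨b i, trivial, hbmem i⟩
    have hextra : ∑ i, (if b i = 0 then (0:ℚ) else lam (b i) * A (b i) i) • t i = 0 := by
      rw [huniv, Finset.sum_biUnion (fun j _ j' _ h => hdisj j j' h)]
      refine Finset.sum_eq_zero ?_
      intro j _
      by_cases hj : j = 0
      · refine Finset.sum_eq_zero ?_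
        intro i hi
        have hbi : b i = j := hbuniq i j hi
        simp [hbi, hj]
      · have : ∀ i ∈ P j,
            (if b i = 0 then (0:ℚ) else lam (b i) * A (b i) i) • t i
              = lam j • (A j i • t i) := by
          intro i hi
          have hbi : b i = j := hbuniq i j hi
          simp [hbi, hj, mul_smul]
        rw [Finset.sum_congr rfl this, ← Finset.smul_sum, hAsum j hj, smul_zero]
    calc v = ∑ i, c i • t i := hc.symm
      _ = ∑ i, c i • t i
          + ∑ i, (if b i = 0 then (0:ℚ) else lam (b i) * A (b i) i) • t i := by
            rw [hextra, add_zero]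
      _ = ∑ i, β i • t i := by
          rw [← Finset.sum_add_distrib]
          refine Finset.sum_congr rfl fun i _ => ?_
          rw [hβ]
          simp [add_smul]
  · -- proper intersection
    intro j hj heq
    obtain ⟨i0, hi0, hval⟩ := hlam_ex j hj
    have hbi0 : b i0 = j := hbuniq i0 j hi0
    have hβi0 : β i0 = 0 := by
      simp only [hβ, hbi0, if_neg hj, hval]
      have hA' : A j i0 ≠ 0 := (hApos j hj i0 hi0).ne'
      field_simp
      ring
    have : i0 ∈ Finset.univ.filter (fun i => β i ≠ 0) ∩ P j := by rw [heq]; exact hi0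
    exact (Finset.mem_filter.mp (Finset.mem_inter.mp this).1).2 hβi0
  · intro j hj i hi
    obtain ⟨hi1, hi2⟩ := Finset.mem_inter.mp hi
    have hne := (Finset.mem_filter.mp hi1).2
    exact lt_of_le_of_ne (hβnonneg j hj i hi2) (Ne.symm hne)
end

section
/- Let x be an element of 𝔥_1 in a graded reductive Lie algebra, with Jordan decomposition x = x_s + x_n (x_s, x_n ∈ 𝔥_1), and let 𝔩 = 𝔥^{x_s} be the centralizer of x_s (the generalized 0-eigenspace of ad x). Writing 𝔮 for the sum of the other generalized eigenspaces of ad x, one has 𝔥 = 𝔩 ⊕ 𝔮, 𝔥·x = (ad x_n)(𝔩) ⊕ 𝔮, and hence, intersecting with 𝔥_1: 𝔥_0·x = 𝔩_0·x_n ⊕ 𝔮_1, so that codim_{𝔥_1}(H_0·x) = codim_{𝔩_1}(L_0·x_n). -/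
open Module LieAlgebra

section Aux

variable {𝕜 L : Type*} [Field 𝕜] [AddCommGroup L] [Module 𝕜 L] {m : ℕ}

/-- Existence of graded projections for an internal direct sum decomposition. -/
theorem aux_proj (H : ZMod m → Submodule 𝕜 L) (hind : iSupIndep H)
    (htop : ⨆ i, H i = ⊤) :
    ∃ π : ZMod m → L →ₗ[𝕜] L,
      (∀ i a, π i a ∈ H i) ∧
      (∀ i, ∀ a ∈ H i, π i a = a) ∧
      (∀ i j, j ≠ i → ∀ a ∈ H j, π i a = 0) := by
  have hInt : DirectSum.IsInternal H :=
    (DirectSum.isInternal_submodule_iff_iSupIndep_and_iSup_eq_top H).mpr ⟨hind, htop⟩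
  set e := LinearEquiv.ofBijective (DirectSum.coeLinearMap H) hInt with he
  refine ⟨fun i => (H i).subtype ∘ₗ
      (DirectSum.component 𝕜 (ZMod m) (fun i => H i) i) ∘ₗ e.symm.toLinearMap,
      fun i a => ?_, fun i a ha => ?_, fun i j hji a ha => ?_⟩
  · exact Submodule.coe_mem _
  · simp only [LinearMap.coe_comp, Function.comp_apply, Submodule.coe_subtype,
      LinearEquiv.coe_coe, ← DirectSum.apply_eq_component]
    rw [hInt.ofBijective_coeLinearMap_of_mem ha]
  · simp only [LinearMap.coe_comp, Function.comp_apply, Submodule.coe_subtype,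
      LinearEquiv.coe_coe, ← DirectSum.apply_eq_component]
    rw [hInt.ofBijective_coeLinearMap_of_mem_ne hji ha]
    rfl

/-- Projections commute with maps of homogeneous degree `d`. -/
theorem aux_comm {H : ZMod m → Submodule 𝕜 L} (htop : ⨆ i, H i = ⊤)
    {π : ZMod m → L →ₗ[𝕜] L}
    (hπself : ∀ i, ∀ a ∈ H i, π i a = a)
    (hπzero : ∀ i j, j ≠ i → ∀ a ∈ H j, π i a = 0)
    {f : L →ₗ[𝕜] L} {d : ZMod m} (hf : ∀ j, ∀ a ∈ H j, f a ∈ H (j + d)) :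
    ∀ i a, π (i + d) (f a) = f (π i a) := by
  intro i a
  have ha : a ∈ ⨆ j, H j := htop.symm ▸ Submodule.mem_top
  refine Submodule.iSup_induction (motive := fun a => π (i + d) (f a) = f (π i a)) H ha
    (fun j b hb => ?_) (by simp) (fun b c hb hc => by simp [map_add, hb, hc])
  rcases eq_or_ne j i with rfl | hne
  · rw [hπself _ _ (hf j b hb), hπself _ _ hb]
  · rw [hπzero _ _ (fun h => hne (add_right_cancel h)) _ (hf j b hb),
      hπzero _ _ hne _ hb, map_zero]

/-- Powers of a degree-one map are homogeneous of the corresponding degree. -/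
theorem aux_pow {H : ZMod m → Submodule 𝕜 L} {f : L →ₗ[𝕜] L}
    (hf : ∀ j, ∀ a ∈ H j, f a ∈ H (j + 1)) :
    ∀ (k : ℕ) (j : ZMod m), ∀ a ∈ H j, (f ^ k) a ∈ H (j + (k : ZMod m)) := by
  intro k
  induction k with
  | zero => intro j a ha; simpa using ha
  | succ k ih =>
    intro j a ha
    have h1 := ih (j + 1) (f a) (hf j a ha)
    have h2 : j + 1 + (k : ZMod m) = j + ((k + 1 : ℕ) : ZMod m) := by push_cast; ring
    rw [h2] at h1
    rw [pow_succ, Module.End.mul_apply]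
    exact h1

end Aux

/-- Let `𝔥 = ⊕_{i∈ℤ/m} 𝔥_i` be a graded finite-dimensional Lie algebra over an
algebraically closed field of characteristic zero, and `x ∈ 𝔥_1` with Jordan
decomposition `x = s + n` (`s, n ∈ 𝔥_1`, `[s,n] = 0`, `ad s` semisimple, `ad n`
nilpotent). Let `𝔩 = 𝔥^s` be the centralizer of `s` (the generalized `0`-eigenspace of
`ad x`) and `𝔮` the sum of the other generalized eigenspaces of `ad x`. Then
`𝔥 = 𝔩 ⊕ 𝔮`, `𝔥·x = (ad n)(𝔩) ⊕ 𝔮`, and intersecting with `𝔥_1`: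
`𝔥_0·x = 𝔩_0·x_n ⊕ 𝔮_1`, whence `codim_{𝔥_1}(𝔥_0·x) = codim_{𝔩_1}(𝔩_0·x_n)`. -/
theorem stmt17 {𝕜 L : Type*} [Field 𝕜] [IsAlgClosed 𝕜] [CharZero 𝕜]
    [LieRing L] [LieAlgebra 𝕜 L] [FiniteDimensional 𝕜 L] {m : ℕ}
    (H : ZMod m → Submodule 𝕜 L)
    (hgrade : ∀ i j : ZMod m, ∀ a ∈ H i, ∀ b ∈ H j, ⁅a, b⁆ ∈ H (i + j))
    (hind : iSupIndep H) (htop : ⨆ i, H i = ⊤)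
    (x s n : L) (hx : x ∈ H 1) (hs : s ∈ H 1) (hn : n ∈ H 1)
    (hxsn : x = s + n) (hcomm : ⁅s, n⁆ = 0)
    (hss : (ad 𝕜 L s).IsSemisimple) (hnil : IsNilpotent (ad 𝕜 L n)) :
    ∀ l q : Submodule 𝕜 L, l = LinearMap.ker (ad 𝕜 L s) →
      q = (⨆ μ ∈ {μ : 𝕜 | μ ≠ 0}, (ad 𝕜 L x).maxGenEigenspace μ) →
    (l ⊔ q = ⊤ ∧ l ⊓ q = ⊥) ∧
    (LinearMap.range (ad 𝕜 L x) = Submodule.map (ad 𝕜 L n) l ⊔ q ∧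
      Submodule.map (ad 𝕜 L n) l ⊓ q = ⊥) ∧
    (Submodule.map (ad 𝕜 L x) (H 0) = Submodule.map (ad 𝕜 L n) (l ⊓ H 0) ⊔ (q ⊓ H 1) ∧
      Submodule.map (ad 𝕜 L n) (l ⊓ H 0) ⊓ (q ⊓ H 1) = ⊥) ∧
    (finrank 𝕜 ↥(H 1) - finrank 𝕜 ↥(Submodule.map (ad 𝕜 L x) (H 0))
      = finrank 𝕜 ↥(l ⊓ H 1) - finrank 𝕜 ↥(Submodule.map (ad 𝕜 L n) (l ⊓ H 0))) := by
  intro l q hl hq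
  -- basic algebraic facts
  have hadd : ad 𝕜 L x = ad 𝕜 L s + ad 𝕜 L n := by rw [hxsn]; exact map_add _ _ _
  have hcom : Commute (ad 𝕜 L s) (ad 𝕜 L n) := by
    have h : (0 : Module.End 𝕜 L) = ad 𝕜 L s * ad 𝕜 L n - ad 𝕜 L n * ad 𝕜 L s := by
      ext a
      simp only [LinearMap.zero_apply, LinearMap.sub_apply, Module.End.mul_apply, ad_apply]
      rw [leibniz_lie, hcomm, zero_lie]
      simp
    exact sub_eq_zero.mp h.symm
  have hXcomS : Commute (ad 𝕜 L x) (ad 𝕜 L s) := by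
    rw [hadd]; exact (Commute.refl _).add_left hcom.symm
  have hnilX : IsNilpotent (ad 𝕜 L x - ad 𝕜 L s) := by
    rw [hadd, add_sub_cancel_left]; exact hnil
  -- `l` is the generalized `0`-eigenspace of `ad x`
  have hl0 : LinearMap.ker (ad 𝕜 L s) = (ad 𝕜 L x).maxGenEigenspace 0 := by
    apply le_antisymm
    · intro a ha
      rw [LinearMap.mem_ker] at ha
      rw [Module.End.mem_maxGenEigenspace]
      obtain ⟨k, hk⟩ := hnil
      refine ⟨k, ?_⟩
      simp only [zero_smul, sub_zero]
      have key : ∀ j : ℕ, ((ad 𝕜 L x) ^ j) a = ((ad 𝕜 L n) ^ j) a ∧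
          ad 𝕜 L s (((ad 𝕜 L n) ^ j) a) = 0 := by
        intro j
        induction j with
        | zero => simpa using ha
        | succ j ih =>
          constructor
          · rw [pow_succ', pow_succ', Module.End.mul_apply, Module.End.mul_apply, ih.1,
              hadd, LinearMap.add_apply, ih.2, zero_add]
          · rw [pow_succ', Module.End.mul_apply]
            calc ad 𝕜 L s (ad 𝕜 L n (((ad 𝕜 L n) ^ j) a))
                = (ad 𝕜 L s * ad 𝕜 L n) (((ad 𝕜 L n) ^ j) a) := rfl
              _ = (ad 𝕜 L n * ad 𝕜 L s) (((ad 𝕜 L n) ^ j) a) := by rw [hcom.eq]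
              _ = 0 := by
                  rw [Module.End.mul_apply, ih.2, map_zero]
      rw [(key k).1, hk, LinearMap.zero_apply]
    · intro a ha
      rw [LinearMap.mem_ker]
      have h := Module.End.apply_eq_of_mem_of_comm_of_isFinitelySemisimple_of_isNil
        (f := ad 𝕜 L x) (g := ad 𝕜 L s) (μ := 0) (k := ⊤) ha hXcomS
        hss.isFinitelySemisimple hnilX
      simpa using h
  -- decomposition `⊤ = l ⊔ q`, `l ⊓ q = ⊥`
  have hsupq : l ⊔ q = ⊤ := by
    rw [hl, hq, hl0, ← Module.End.iSup_maxGenEigenspace_eq_top (ad 𝕜 L x)]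
    exact (iSup_split_single _ 0).symm
  have hdisjq : Disjoint l q := by
    rw [hl, hq, hl0]
    exact Module.End.independent_maxGenEigenspace (ad 𝕜 L x) 0
  have hinfq : l ⊓ q = ⊥ := disjoint_iff.mp hdisjq
  -- `ad n` preserves `l`
  have hql : Submodule.map (ad 𝕜 L n) l ≤ l := by
    intro y hy
    obtain ⟨a, ha, rfl⟩ := Submodule.mem_map.mp hy
    rw [hl, LinearMap.mem_ker] at ha
    rw [ad_apply] at ha
    rw [hl, LinearMap.mem_ker, ad_apply, ad_apply]
    simp [leibniz_lie, hcomm, ha]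
  -- `ad x` preserves `q` and restricts to a bijection of `q`
  have hstabq : Submodule.map (ad 𝕜 L x) q ≤ q := by
    rw [hq, Submodule.map_iSup]
    refine iSup_mono fun μ => ?_
    rw [Submodule.map_iSup]
    refine iSup_mono fun hμ => ?_
    rintro _ ⟨a, ha, rfl⟩
    exact Module.End.mapsTo_maxGenEigenspace_of_comm (Commute.refl _) μ ha
  have hker : LinearMap.ker (ad 𝕜 L x) ≤ l := by
    intro a ha
    rw [LinearMap.mem_ker] at ha
    rw [hl, hl0, Module.End.mem_maxGenEigenspace]
    exact ⟨1, by simpa using ha⟩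
  have hmt : Set.MapsTo (ad 𝕜 L x) q q := fun a ha => hstabq ⟨a, ha, rfl⟩
  have hqx : Submodule.map (ad 𝕜 L x) q = q := by
    set g := (ad 𝕜 L x).restrict hmt with hg
    have hginj : Function.Injective g := by
      intro a b hab
      have h0 : ad 𝕜 L x ((a : L) - b) = 0 := by
        have h1 := congrArg Subtype.val hab
        change ad 𝕜 L x a = ad 𝕜 L x b at h1
        rw [map_sub, h1, sub_self]
      have hmem : ((a : L) - b) ∈ l ⊓ q :=
        ⟨hker (LinearMap.mem_ker.mpr h0), Submodule.sub_mem q a.2 b.2⟩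
      rw [hinfq, Submodule.mem_bot, sub_eq_zero] at hmem
      exact Subtype.ext hmem
    have hgsurj := LinearMap.injective_iff_surjective.mp hginj
    apply le_antisymm hstabq
    intro y hy
    obtain ⟨z, hz⟩ := hgsurj ⟨y, hy⟩
    refine ⟨(z : L), z.2, ?_⟩
    have := congrArg Subtype.val hz
    exact this
  -- on `l`, `ad x` and `ad n` agree
  have hxn : ∀ a ∈ l, ad 𝕜 L x a = ad 𝕜 L n a := by
    intro a ha
    rw [hl, LinearMap.mem_ker] at ha
    rw [hadd, LinearMap.add_apply, ha, zero_add]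
  have hmapl : Submodule.map (ad 𝕜 L x) l = Submodule.map (ad 𝕜 L n) l := by
    apply le_antisymm <;> rintro _ ⟨a, ha, rfl⟩
    · exact ⟨a, ha, (hxn a ha).symm⟩
    · exact ⟨a, ha, hxn a ha⟩
  -- claim 2
  have hrange : LinearMap.range (ad 𝕜 L x) = Submodule.map (ad 𝕜 L n) l ⊔ q := by
    rw [← Submodule.map_top, ← hsupq, Submodule.map_sup, hmapl, hqx]
  have hinf2 : Submodule.map (ad 𝕜 L n) l ⊓ q = ⊥ := by
    rw [eq_bot_iff, ← hinfq]
    exact inf_le_inf hql le_rfl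
  -- graded projections
  obtain ⟨π, hπmem, hπself, hπzero⟩ := aux_proj H hind htop
  have hfs : ∀ j, ∀ a ∈ H j, ad 𝕜 L s a ∈ H (j + 1) := by
    intro j a ha
    rw [ad_apply]
    have := hgrade 1 j s hs a ha
    rwa [add_comm] at this
  have hfx : ∀ j, ∀ a ∈ H j, ad 𝕜 L x a ∈ H (j + 1) := by
    intro j a ha
    rw [ad_apply]
    have := hgrade 1 j x hx a ha
    rwa [add_comm] at this
  have hcommS := aux_comm htop hπself hπzero hfs
  have hcommX := aux_comm htop hπself hπzero hfx
  set N := finrank 𝕜 L with hN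
  have hcommN : ∀ i b, π (i + (N : ZMod m)) (((ad 𝕜 L x) ^ N) b)
      = ((ad 𝕜 L x) ^ N) (π i b) :=
    aux_comm htop hπself hπzero (aux_pow hfx N)
  -- `l` is killed by `(ad x) ^ N`
  have hNl : ∀ a ∈ l, ((ad 𝕜 L x) ^ N) a = 0 := by
    intro a ha
    rw [hl, hl0, Module.End.maxGenEigenspace_eq_genEigenspace_finrank,
      Module.End.mem_genEigenspace_nat, LinearMap.mem_ker] at ha
    simpa using ha
  -- `q = range ((ad x) ^ N)`
  have hmapqN : ∀ k : ℕ, Submodule.map ((ad 𝕜 L x) ^ k) q = q := by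
    intro k
    induction k with
    | zero => rw [pow_zero, Module.End.one_eq_id, Submodule.map_id]
    | succ k ih =>
      rw [pow_succ, Module.End.mul_eq_comp, Submodule.map_comp, hqx, ih]
  have hmapl0 : Submodule.map ((ad 𝕜 L x) ^ N) l = ⊥ := by
    rw [Submodule.eq_bot_iff]
    rintro _ ⟨a, ha, rfl⟩
    exact hNl a ha
  have hqr : q = LinearMap.range ((ad 𝕜 L x) ^ N) := by
    rw [← Submodule.map_top, ← hsupq, Submodule.map_sup, hmapl0, hmapqN N, bot_sup_eq]
  -- `l` and `q` are graded
  have hgl : ∀ a ∈ l, ∀ i, π i a ∈ l := by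
    intro a ha i
    have ha' : ad 𝕜 L s a = 0 := by rw [hl, LinearMap.mem_ker] at ha; exact ha
    rw [hl, LinearMap.mem_ker, ← hcommS i a, ha', map_zero]
  have hgq : ∀ a ∈ q, ∀ i, π i a ∈ q := by
    intro a ha i
    rw [hqr] at ha ⊢
    obtain ⟨b, rfl⟩ := ha
    have h := hcommN (i - (N : ZMod m)) b
    rw [sub_add_cancel] at h
    rw [h]
    exact LinearMap.mem_range_self _ _
  -- splitting homogeneous elements
  have hsplit : ∀ (i : ZMod m), ∀ c ∈ H i, ∀ a ∈ l, ∀ b ∈ q, c = a + b →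
      a ∈ H i ∧ b ∈ H i := by
    intro i c hc a ha b hb hab
    have h1 : π i c = c := hπself i c hc
    have h5 : π i a + π i b = c := by rw [← map_add, ← hab, h1]
    have h4 : (a - π i a) + (b - π i b) = 0 := by
      rw [sub_add_sub_comm, ← hab, h5, sub_self]
    have h2 : a - π i a ∈ l := Submodule.sub_mem l ha (hgl a ha i)
    have h3 : b - π i b ∈ q := Submodule.sub_mem q hb (hgq b hb i)
    have h6 : a - π i a ∈ l ⊓ q :=
      ⟨h2, by rw [eq_neg_of_add_eq_zero_left h4]; exact Submodule.neg_mem q h3⟩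
    have h7 : b - π i b ∈ l ⊓ q :=
      ⟨by rw [eq_neg_of_add_eq_zero_right h4]; exact Submodule.neg_mem l h2, h3⟩
    rw [hinfq, Submodule.mem_bot, sub_eq_zero] at h6 h7
    exact ⟨h6 ▸ hπmem i a, h7 ▸ hπmem i b⟩
  -- claim 3
  have hc3 : Submodule.map (ad 𝕜 L x) (H 0)
      = Submodule.map (ad 𝕜 L n) (l ⊓ H 0) ⊔ (q ⊓ H 1) := by
    apply le_antisymm
    · rintro _ ⟨c, hc, rfl⟩
      have hctop : c ∈ l ⊔ q := by rw [hsupq]; trivial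
      obtain ⟨a, ha, b, hb, rfl⟩ := Submodule.mem_sup.mp hctop
      obtain ⟨haH, hbH⟩ := hsplit 0 _ hc a ha b hb rfl
      rw [map_add]
      apply Submodule.add_mem_sup
      · exact ⟨a, ⟨ha, haH⟩, (hxn a ha).symm⟩
      · refine ⟨hstabq ⟨b, hb, rfl⟩, ?_⟩
        have := hgrade 1 0 x hx b hbH
        rw [add_zero] at this
        rwa [ad_apply]
    · refine sup_le ?_ ?_
      · rintro _ ⟨a, ⟨hal, haH⟩, rfl⟩
        exact ⟨a, haH, hxn a hal⟩
      · rintro y ⟨hyq, hyH⟩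
        have hy' : y ∈ Submodule.map (ad 𝕜 L x) q := by rw [hqx]; exact hyq
        obtain ⟨z, hz, rfl⟩ := hy'
        refine ⟨π 0 z, hπmem 0 z, ?_⟩
        have h := hcommX 0 z
        rw [zero_add] at h
        rw [← h]
        exact hπself 1 _ hyH
  have hc3inf : Submodule.map (ad 𝕜 L n) (l ⊓ H 0) ⊓ (q ⊓ H 1) = ⊥ := by
    rw [eq_bot_iff, ← hinfq]
    refine le_inf (le_trans inf_le_left ?_) (le_trans inf_le_right inf_le_left)
    exact le_trans (Submodule.map_mono inf_le_left) hql
  -- claim 4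
  have hH1 : (l ⊓ H 1) ⊔ (q ⊓ H 1) = H 1 := by
    apply le_antisymm (sup_le inf_le_right inf_le_right)
    intro c hc
    have hctop : c ∈ l ⊔ q := by rw [hsupq]; trivial
    obtain ⟨a, ha, b, hb, rfl⟩ := Submodule.mem_sup.mp hctop
    obtain ⟨haH, hbH⟩ := hsplit 1 _ hc a ha b hb rfl
    exact Submodule.add_mem_sup ⟨ha, haH⟩ ⟨hb, hbH⟩
  have hH1inf : (l ⊓ H 1) ⊓ (q ⊓ H 1) = ⊥ := by
    rw [eq_bot_iff, ← hinfq]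
    exact le_inf (le_trans inf_le_left inf_le_left) (le_trans inf_le_right inf_le_left)
  have e1 : finrank 𝕜 ↥(H 1) = finrank 𝕜 ↥(l ⊓ H 1) + finrank 𝕜 ↥(q ⊓ H 1) := by
    have h := Submodule.finrank_sup_add_finrank_inf_eq (l ⊓ H 1) (q ⊓ H 1)
    rw [hH1, hH1inf] at h
    simpa using h
  have e2 : finrank 𝕜 ↥(Submodule.map (ad 𝕜 L x) (H 0))
      = finrank 𝕜 ↥(Submodule.map (ad 𝕜 L n) (l ⊓ H 0)) + finrank 𝕜 ↥(q ⊓ H 1) := by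
    have h := Submodule.finrank_sup_add_finrank_inf_eq
      (Submodule.map (ad 𝕜 L n) (l ⊓ H 0)) (q ⊓ H 1)
    rw [hc3inf, ← hc3] at h
    simpa using h
  exact ⟨⟨hsupq, hinfq⟩, ⟨hrange, hinf2⟩, ⟨hc3, hc3inf⟩, by rw [e1, e2]; omega⟩
end
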